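/- Let m ≥ 1 be a natural number, θ > 0, A > 0, and C ≥ 0 be real numbers, and let X be a random variable with probability density g(l) = θ^m·l^{m−1}·e^{−θl}/(m−1)! on (0,∞) (the Gamma distribution with integer shape m and rate θ). Then E[log₂(1 + A·X + C)] = ∫_0^∞ e^{−θ·max(β(t),0)} · ∑_{k=0}^{m−1} (θ·max(β(t),0))^k / k! dt, where β(t) = (2^t − 1 − C)/A. -/

import Mathlib

open Real MeasureTheory Finset

open scoped ENNReal

namespace ErgodicAux

lemma integrableOn_pow_mul_exp {θ : ℝ} (hθ : 0 < θ) (n : ℕ) :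
    IntegrableOn (fun l : ℝ => l ^ n * Real.exp (-θ * l)) (Set.Ioi 0) := by
  have h := integrableOn_rpow_mul_exp_neg_mul_rpow (s := (n : ℝ)) (p := 1) (b := θ)
    (lt_of_lt_of_le neg_one_lt_zero (Nat.cast_nonneg n)) one_pos hθ
  refine h.congr_fun (fun x _ => ?_) measurableSet_Ioi
  beta_reduce
  rw [Real.rpow_natCast, Real.rpow_one, neg_mul]

lemma hasDerivAt_F {θ : ℝ} (n : ℕ) (x : ℝ) :
    HasDerivAt (fun l : ℝ => -(Real.exp (-θ * l) * ∑ k ∈ Finset.range (n + 1),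
        (θ * l) ^ k / (Nat.factorial k)))
      (θ ^ (n + 1) * x ^ n * Real.exp (-θ * x) / (Nat.factorial n)) x := by
  have hexp : HasDerivAt (fun l : ℝ => Real.exp (-θ * l)) (-θ * Real.exp (-θ * x)) x := by
    have h1 : HasDerivAt (fun l : ℝ => -θ * l) (-θ) x := by
      simpa using (hasDerivAt_id x).const_mul (-θ)
    simpa [mul_comm] using h1.exp
  have hterm : ∀ k ∈ Finset.range (n + 1),
      HasDerivAt (fun l : ℝ => (θ * l) ^ k / (Nat.factorial k))
        ((k * (θ * x) ^ (k - 1) * θ) / (Nat.factorial k)) x := by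
    intro k _
    have h1 : HasDerivAt (fun l : ℝ => θ * l) θ x := by
      simpa using (hasDerivAt_id x).const_mul θ
    exact ((hasDerivAt_pow k (θ * x)).comp x h1).div_const _
  have hS := HasDerivAt.fun_sum hterm
  have hsum_eq : ∑ k ∈ Finset.range (n + 1), ((k : ℝ) * (θ * x) ^ (k - 1) * θ) / (Nat.factorial k)
      = θ * ∑ k ∈ Finset.range n, (θ * x) ^ k / (Nat.factorial k) := by
    rw [Finset.sum_range_succ' (fun k => ((k : ℝ) * (θ * x) ^ (k - 1) * θ) / (Nat.factorial k))]
    simp only [Nat.cast_zero, zero_mul, Nat.factorial_zero, Nat.cast_one, zero_div, add_zero,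
      Nat.add_sub_cancel]
    rw [Finset.mul_sum]
    refine Finset.sum_congr rfl fun j _ => ?_
    rw [Nat.factorial_succ]
    have hj1 : ((j : ℝ) + 1) ≠ 0 := by positivity
    have hjf : ((Nat.factorial j : ℝ)) ≠ 0 := by
      exact_mod_cast (Nat.factorial_pos j).ne'
    push_cast
    field_simp
  rw [hsum_eq] at hS
  have := (hexp.fun_mul hS).fun_neg
  refine this.congr_deriv ?_
  rw [Finset.sum_range_succ, mul_pow]
  field_simp
  ring

lemma tendsto_F {θ : ℝ} (hθ : 0 < θ) (n : ℕ) :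
    Filter.Tendsto (fun l : ℝ => -(Real.exp (-θ * l) * ∑ k ∈ Finset.range (n + 1),
        (θ * l) ^ k / (Nat.factorial k))) Filter.atTop (nhds 0) := by
  have h0 : Filter.Tendsto (fun l : ℝ => Real.exp (-θ * l) * ∑ k ∈ Finset.range (n + 1),
      (θ * l) ^ k / (Nat.factorial k)) Filter.atTop (nhds 0) := by
    have heq : (fun l : ℝ => Real.exp (-θ * l) * ∑ k ∈ Finset.range (n + 1),
        (θ * l) ^ k / (Nat.factorial k))
        = fun l : ℝ => ∑ k ∈ Finset.range (n + 1),
            ((θ * l) ^ k * Real.exp (-(θ * l))) / (Nat.factorial k) := by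
      funext l
      rw [Finset.mul_sum]
      refine Finset.sum_congr rfl fun k _ => ?_
      rw [neg_mul]
      ring
    rw [heq]
    have : Filter.Tendsto (fun l : ℝ => θ * l) Filter.atTop Filter.atTop :=
      Filter.tendsto_id.const_mul_atTop hθ
    have hsum : Filter.Tendsto (fun l : ℝ => ∑ k ∈ Finset.range (n + 1),
        ((θ * l) ^ k * Real.exp (-(θ * l))) / (Nat.factorial k)) Filter.atTop
        (nhds (∑ k ∈ Finset.range (n + 1), (0 : ℝ))) := by
      refine tendsto_finset_sum _ fun k _ => ?_
      have hk := (Real.tendsto_pow_mul_exp_neg_atTop_nhds_zero k).comp this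
      simpa using hk.div_const (Nat.factorial k : ℝ)
    simpa using hsum
  simpa using h0.neg

lemma erlang_tail {θ : ℝ} (hθ : 0 < θ) (n : ℕ) {x : ℝ} (hx : 0 ≤ x) :
    ∫ l in Set.Ioi x, θ ^ (n + 1) * l ^ n * Real.exp (-θ * l) / (Nat.factorial n)
      = Real.exp (-θ * x) * ∑ k ∈ Finset.range (n + 1), (θ * x) ^ k / (Nat.factorial k) := by
  have hint : IntegrableOn
      (fun l : ℝ => θ ^ (n + 1) * l ^ n * Real.exp (-θ * l) / (Nat.factorial n))
      (Set.Ioi x) := by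
    have h1 : IntegrableOn
        (fun l : ℝ => θ ^ (n + 1) / (Nat.factorial n) * (l ^ n * Real.exp (-θ * l)))
        (Set.Ioi 0) :=
      (integrableOn_pow_mul_exp hθ n).const_mul (θ ^ (n + 1) / (Nat.factorial n))
    have h2 : IntegrableOn
        (fun l : ℝ => θ ^ (n + 1) * l ^ n * Real.exp (-θ * l) / (Nat.factorial n))
        (Set.Ioi 0) := by
      refine h1.congr_fun (fun l _ => ?_) measurableSet_Ioi
      ring
    exact h2.mono_set (Set.Ioi_subset_Ioi hx)
  have key := integral_Ioi_of_hasDerivAt_of_tendsto'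
    (f := fun l : ℝ => -(Real.exp (-θ * l) * ∑ k ∈ Finset.range (n + 1),
        (θ * l) ^ k / (Nat.factorial k)))
    (fun l _ => hasDerivAt_F n l) hint (tendsto_F hθ n)
  rw [key]
  ring

lemma erlang_integrableOn {θ : ℝ} (hθ : 0 < θ) (n : ℕ) {x : ℝ} (hx : 0 ≤ x) :
    IntegrableOn
      (fun l : ℝ => θ ^ (n + 1) * l ^ n * Real.exp (-θ * l) / (Nat.factorial n))
      (Set.Ioi x) := by
  have h1 : IntegrableOn
      (fun l : ℝ => θ ^ (n + 1) / (Nat.factorial n) * (l ^ n * Real.exp (-θ * l)))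
      (Set.Ioi 0) :=
    (integrableOn_pow_mul_exp hθ n).const_mul (θ ^ (n + 1) / (Nat.factorial n))
  have h2 : IntegrableOn
      (fun l : ℝ => θ ^ (n + 1) * l ^ n * Real.exp (-θ * l) / (Nat.factorial n))
      (Set.Ioi 0) := by
    refine h1.congr_fun (fun l _ => ?_) measurableSet_Ioi
    ring
  exact h2.mono_set (Set.Ioi_subset_Ioi hx)

lemma lintegral_tail {θ : ℝ} (hθ : 0 < θ) (n : ℕ) {x : ℝ} (hx : 0 ≤ x) :
    ∫⁻ l in Set.Ioi x, ENNReal.ofReal (if 0 < l then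
        θ ^ (n + 1) * l ^ n * Real.exp (-θ * l) / (Nat.factorial n) else 0)
      = ENNReal.ofReal (Real.exp (-θ * x) *
          ∑ k ∈ Finset.range (n + 1), (θ * x) ^ k / (Nat.factorial k)) := by
  have h1 : ∀ l ∈ Set.Ioi x,
      ENNReal.ofReal (if 0 < l then
          θ ^ (n + 1) * l ^ n * Real.exp (-θ * l) / (Nat.factorial n) else 0)
        = ENNReal.ofReal (θ ^ (n + 1) * l ^ n * Real.exp (-θ * l) / (Nat.factorial n)) := by
    intro l hl
    rw [if_pos (lt_of_le_of_lt hx hl)]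
  rw [setLIntegral_congr_fun measurableSet_Ioi (fun l hl => h1 l hl),
    ← MeasureTheory.ofReal_integral_eq_lintegral_ofReal (erlang_integrableOn hθ n hx)
      ((ae_restrict_iff' measurableSet_Ioi).mpr (ae_of_all _ fun l hl => by
        have h0 : (0:ℝ) ≤ l := hx.trans (le_of_lt hl)
        positivity)),
    erlang_tail hθ n hx]

end ErgodicAux

/-- Core of Theorem 2: if `X` has the Gamma density `g(l) = θ^m l^{m−1} e^{−θl}/(m−1)!`
on `(0,∞)` (integer shape `m ≥ 1`, rate `θ > 0`), then for `A > 0` and `C ≥ 0`,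
`E[log₂(1 + A·X + C)] = ∫_0^∞ e^{−θ·max(β(t),0)} ∑_{k=0}^{m−1} (θ·max(β(t),0))^k/k! dt`
where `β(t) = (2^t − 1 − C)/A`. -/
theorem ergodic_capacity_layer_cake {Ω : Type*} [MeasurableSpace Ω] (μ : Measure Ω)
    [IsProbabilityMeasure μ] (X : Ω → ℝ) (hX : Measurable X)
    (m : ℕ) (hm : 1 ≤ m) (θ A C : ℝ) (hθ : 0 < θ) (hA : 0 < A) (hC : 0 ≤ C)
    (hdist : Measure.map X μ = volume.withDensity (fun l =>
      ENNReal.ofReal (if 0 < l then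
        θ ^ m * l ^ (m - 1) * Real.exp (-θ * l) / (Nat.factorial (m - 1)) else 0))) :
    (∫ ω, Real.logb 2 (1 + A * X ω + C) ∂μ)
      = ∫ t in Set.Ioi (0 : ℝ),
          Real.exp (-θ * max (((2 : ℝ) ^ t - 1 - C) / A) 0) *
            ∑ k ∈ Finset.range m,
              (θ * max (((2 : ℝ) ^ t - 1 - C) / A) 0) ^ k / (Nat.factorial k) := by
  obtain ⟨n, rfl⟩ : ∃ n, m = n + 1 := ⟨m - 1, (Nat.succ_pred_eq_of_pos hm).symm⟩
  simp only [Nat.add_sub_cancel] at hdist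
  set D : ℝ → ℝ≥0∞ := fun l => ENNReal.ofReal (if 0 < l then
      θ ^ (n + 1) * l ^ n * Real.exp (-θ * l) / (Nat.factorial n) else 0) with hDdef
  have hDmeas : Measurable D := by
    apply Measurable.ennreal_ofReal
    refine Measurable.ite ?_ ?_ measurable_const
    · exact measurableSet_lt measurable_const measurable_id
    · exact (((measurable_id.pow_const n).const_mul (θ ^ (n + 1))).mul
        ((measurable_id.const_mul (-θ)).exp)).div_const _
  have hmap : ∀ s : Set ℝ, MeasurableSet s → μ (X ⁻¹' s) = ∫⁻ l in s, D l := by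
    intro s hs
    rw [← Measure.map_apply hX hs, hdist, withDensity_apply _ hs]
  have hD0 : ∀ l : ℝ, ¬ 0 < l → D l = 0 := by
    intro l hl
    rw [hDdef]
    simp only [if_neg hl, ENNReal.ofReal_zero]
  have hXpos : ∀ᵐ ω ∂μ, 0 < X ω := by
    rw [ae_iff]
    have hset : {ω | ¬ 0 < X ω} = X ⁻¹' (Set.Iic 0) := by
      ext ω; simp [not_lt]
    rw [hset, hmap _ measurableSet_Iic,
      setLIntegral_congr_fun measurableSet_Iic
        (fun l (hl : l ∈ Set.Iic 0) => hD0 l (not_lt.mpr hl)),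
      lintegral_zero]
  have hXint : Integrable X μ := by
    have hid : Integrable (fun x : ℝ => x) (Measure.map X μ) := by
      rw [hdist, integrable_withDensity_iff hDmeas (ae_of_all _ fun l => ENNReal.ofReal_lt_top)]
      have heq : (fun l : ℝ => l * (D l).toReal)
          = (Set.Ioi (0:ℝ)).indicator
              (fun l => θ ^ (n + 1) / (Nat.factorial n) * (l ^ (n + 1) * Real.exp (-θ * l))) := by
        funext l
        by_cases h : 0 < l
        · rw [Set.indicator_of_mem (Set.mem_Ioi.mpr h), hDdef]
          simp only [if_pos h]
          rw [ENNReal.toReal_ofReal (by positivity)]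
          ring
        · rw [Set.indicator_of_notMem (by simpa [Set.mem_Ioi] using h), hD0 l h]
          simp
      rw [heq]
      have hint : IntegrableOn
          (fun l : ℝ => θ ^ (n + 1) / (Nat.factorial n) * (l ^ (n + 1) * Real.exp (-θ * l)))
          (Set.Ioi 0) :=
        (ErgodicAux.integrableOn_pow_mul_exp hθ (n + 1)).const_mul _
      exact hint.integrable_indicator measurableSet_Ioi
    exact (integrable_map_measure aestronglyMeasurable_id hX.aemeasurable).mp hid
  have hYm : Measurable (fun ω => Real.logb 2 (1 + A * X ω + C)) := by
    have h1 : Measurable (fun ω => 1 + A * X ω + C) := ((hX.const_mul A).const_add 1).add_const C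
    simp only [Real.logb]
    exact (Real.measurable_log.comp h1).div_const _
  have hYnn : 0 ≤ᵐ[μ] fun ω => Real.logb 2 (1 + A * X ω + C) := by
    filter_upwards [hXpos] with ω hω
    exact Real.logb_nonneg one_lt_two (by nlinarith)
  have hYint : Integrable (fun ω => Real.logb 2 (1 + A * X ω + C)) μ := by
    refine Integrable.mono' ((((hXint.const_mul A).add (integrable_const C))).div_const (Real.log 2))
      hYm.aestronglyMeasurable ?_
    filter_upwards [hXpos] with ω hω
    have hpos : (0:ℝ) < 1 + A * X ω + C := by nlinarith
    have h0 : 0 ≤ Real.logb 2 (1 + A * X ω + C) := Real.logb_nonneg one_lt_two (by nlinarith)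
    rw [Real.norm_eq_abs, abs_of_nonneg h0, Real.logb]
    have hlog : Real.log (1 + A * X ω + C) ≤ A * X ω + C := by
      have := Real.log_le_sub_one_of_pos hpos; linarith
    have h2 : (0:ℝ) < Real.log 2 := Real.log_pos one_lt_two
    gcongr
    simpa using hlog
  rw [Integrable.integral_eq_integral_meas_lt hYint hYnn]
  refine setIntegral_congr_fun measurableSet_Ioi fun t _ => ?_
  have hb0 : (0:ℝ) ≤ max (((2:ℝ) ^ t - 1 - C) / A) 0 := le_max_right _ _
  have hlogbm : Measurable fun x : ℝ => Real.logb 2 (1 + A * x + C) := by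
    simp only [Real.logb]
    exact (Real.measurable_log.comp
      (((measurable_id.const_mul A).const_add 1).add_const C)).div_const _
  have hsm : MeasurableSet {x : ℝ | t < Real.logb 2 (1 + A * x + C)} :=
    measurableSet_lt measurable_const hlogbm
  have hpre : {a | t < Real.logb 2 (1 + A * X a + C)}
      = X ⁻¹' {x | t < Real.logb 2 (1 + A * x + C)} := rfl
  rw [hpre, measureReal_def, hmap _ hsm]
  have hind : ({x : ℝ | t < Real.logb 2 (1 + A * x + C)}).indicator D
      = (Set.Ioi (max (((2:ℝ) ^ t - 1 - C) / A) 0)).indicator D := by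
    funext l
    by_cases hl : 0 < l
    · have hiff : l ∈ {x : ℝ | t < Real.logb 2 (1 + A * x + C)}
          ↔ l ∈ Set.Ioi (max (((2:ℝ) ^ t - 1 - C) / A) 0) := by
        simp only [Set.mem_setOf_eq, Set.mem_Ioi, max_lt_iff]
        rw [Real.lt_logb_iff_rpow_lt one_lt_two (by nlinarith)]
        constructor
        · intro h
          exact ⟨by rw [div_lt_iff₀ hA]; nlinarith, hl⟩
        · rintro ⟨h1, -⟩
          rw [div_lt_iff₀ hA] at h1
          nlinarith
      simp only [Set.indicator_apply]
      rw [if_congr hiff rfl rfl]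
    · simp only [Set.indicator_apply, hD0 l hl, ite_self]
  rw [← lintegral_indicator hsm, hind, lintegral_indicator measurableSet_Ioi, hDdef,
    ErgodicAux.lintegral_tail hθ n hb0,
    ENNReal.toReal_ofReal (by positivity)]
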